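/- For a rooted complete binary tree of depth k ≥ 3 whose 2^(k−1) leaves are each colored with one of two colors, the number of color-preserving automorphisms (tree automorphisms fixing adjacency and preserving leaf colors) is at least 2^(2^(k−3)), for every coloring. -/

import Mathlib

/-- The vertices of a `k`-level complete binary tree: binary strings of
length `< k`.  The root is the empty string (level 1), and a vertex at
level `i` (a string of length `i - 1`) has children obtained by prepending a
bit; the leaves are the `2 ^ (k - 1)` strings of length `k - 1` (level `k`). -/
def TVert (k : ℕ) : Type := {l : List Bool // l.length < k}

/-- Adjacency in the tree: one vertex is a child of the other. -/
def TAdj (k : ℕ) (x y : TVert k) : Prop :=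
  (∃ b : Bool, y.val = b :: x.val) ∨ (∃ b : Bool, x.val = b :: y.val)

/-- The color-preserving automorphisms of the `k`-level complete binary tree
whose leaves are colored by `c` (colors are booleans): permutations of the
vertices preserving adjacency in both directions and the colors of leaves. -/
def ColorAuts (k : ℕ) (c : List Bool → Bool) : Set (Equiv.Perm (TVert k)) :=
  {f | (∀ x y : TVert k, TAdj k x y ↔ TAdj k (f x) (f y)) ∧
       ∀ x : TVert k, x.val.length = k - 1 → c ((f x).val) = c x.val}

namespace Aux

variable (c s : List Bool → Bool)

def cA (w : List Bool) : Bool := c (true :: false :: w) == c (false :: false :: w)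
def cB (w : List Bool) : Bool := c (true :: true :: w) == c (false :: true :: w)
def cC (w : List Bool) : Bool := c (true :: false :: w) == c (true :: true :: w)

def hf (w : List Bool) (b : Bool) : Bool :=
  s w && (if cA c w then !b else if cB c w then b else !(cC c w))

def rf (w : List Bool) : Bool := s w && (!(cA c w) && !(cB c w))

def Fval (k : ℕ) (l : List Bool) : List Bool :=
  if l.length + 1 = k then
    match l with
    | a :: b :: w => (xor a (hf c s w b)) :: (xor b (rf c s w)) :: w
    | l => l
  else if l.length + 2 = k then
    match l with
    | b :: w => (xor b (rf c s w)) :: w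
    | l => l
  else l

lemma Fval_length (k : ℕ) (l : List Bool) : (Fval c s k l).length = l.length := by
  unfold Fval
  rcases l with _ | ⟨a, _ | ⟨b, w⟩⟩ <;> split_ifs <;> simp

lemma hf_rf (w : List Bool) (b : Bool) :
    hf c s w (xor b (rf c s w)) = hf c s w b := by
  unfold hf rf
  cases hA : cA c w <;> cases hB : cB c w <;> cases s w <;> cases b <;> simp

lemma Fval_invol (k : ℕ) (l : List Bool) : Fval c s k (Fval c s k l) = l := by
  unfold Fval
  rcases l with _ | ⟨a, _ | ⟨b, w⟩⟩ <;> split_ifs <;> simp_all [hf_rf]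

lemma Fval_cons (k : ℕ) (x : List Bool) (hx : x.length + 1 < k) (b : Bool) :
    ∃ b' : Bool, Fval c s k (b :: x) = b' :: Fval c s k x := by
  unfold Fval
  rcases x with _ | ⟨b2, w⟩ <;> split_ifs <;>
    first | exact ⟨_, rfl⟩ | (simp only [List.length_cons] at *; omega)

def Fperm (k : ℕ) : Equiv.Perm (TVert k) :=
  Function.Involutive.toPerm
    (fun x : TVert k => ⟨Fval c s k x.val, by rw [Fval_length]; exact x.2⟩)
    (fun x => Subtype.ext (Fval_invol c s k x.val))

lemma Fperm_val (k : ℕ) (x : TVert k) : (Fperm c s k x).val = Fval c s k x.val := rfl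

lemma adj_of_adj (k : ℕ) (x y : TVert k) (h : TAdj k x y) :
    TAdj k (Fperm c s k x) (Fperm c s k y) := by
  rcases h with ⟨b, hb⟩ | ⟨b, hb⟩
  · obtain ⟨b', hb'⟩ := Fval_cons c s k x.val (by have h := y.2; rw [hb, List.length_cons] at h; exact h) b
    exact Or.inl ⟨b', by rw [Fperm_val, Fperm_val, hb, hb']⟩
  · obtain ⟨b', hb'⟩ := Fval_cons c s k y.val (by have h := x.2; rw [hb, List.length_cons] at h; exact h) b
    exact Or.inr ⟨b', by rw [Fperm_val, Fperm_val, hb, hb']⟩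

lemma Fperm_invol (k : ℕ) (x : TVert k) : Fperm c s k (Fperm c s k x) = x :=
  Subtype.ext (Fval_invol c s k x.val)

lemma adj_iff (k : ℕ) (x y : TVert k) :
    TAdj k x y ↔ TAdj k (Fperm c s k x) (Fperm c s k y) := by
  constructor
  · exact adj_of_adj c s k x y
  · intro h
    have := adj_of_adj c s k _ _ h
    rwa [Fperm_invol, Fperm_invol] at this

lemma Fval_color (k : ℕ) (hk : 3 ≤ k) (l : List Bool) (hl : l.length + 1 = k) :
    c (Fval c s k l) = c l := by
  rcases l with _ | ⟨a, _ | ⟨b, w⟩⟩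
  · simp at hl; omega
  · simp at hl; omega
  · unfold Fval
    rw [if_pos hl]
    show c ((xor a (hf c s w b)) :: (xor b (rf c s w)) :: w) = _
    unfold hf rf cA cB cC
    cases s w
    · simp
    · cases a <;> cases b <;>
        cases h1 : c (true :: false :: w) <;> cases h2 : c (false :: false :: w) <;>
        cases h3 : c (true :: true :: w) <;> cases h4 : c (false :: true :: w) <;>
        simp_all

lemma Fperm_mem (k : ℕ) (hk : 3 ≤ k) : Fperm c s k ∈ ColorAuts k c :=
  ⟨adj_iff c s k, fun x hx => Fval_color c s k hk x.val (by omega)⟩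

lemma moved (k : ℕ) (w : List Bool) (hw : w.length + 3 = k) (hs : s w = true) :
    ∃ l : List Bool, l.length < k ∧ Fval c s k l ≠ l ∧
      ∀ s' : List Bool → Bool, s' w = false → Fval c s' k l = l := by
  by_cases hA : cA c w = true
  · refine ⟨true :: false :: w, by simp; omega, ?_, ?_⟩
    · unfold Fval
      rw [if_pos (by simp; omega)]
      unfold hf
      simp [hA, hs]
    · intro s' hs'
      unfold Fval
      rw [if_pos (by simp; omega)]
      unfold hf rf
      simp [hs']
  · by_cases hB : cB c w = true
    · refine ⟨true :: true :: w, by simp; omega, ?_, ?_⟩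
      · unfold Fval
        rw [if_pos (by simp; omega)]
        unfold hf
        simp [hA, hB, hs]
      · intro s' hs'
        unfold Fval
        rw [if_pos (by simp; omega)]
        unfold hf rf
        simp [hs']
    · refine ⟨false :: w, by simp; omega, ?_, ?_⟩
      · unfold Fval
        rw [if_neg (by simp; omega), if_pos (by simp; omega)]
        unfold rf
        simp [hA, hB, hs]
      · intro s' hs'
        unfold Fval
        rw [if_neg (by simp; omega), if_pos (by simp; omega)]
        unfold rf
        simp [hs']

def gate (k : ℕ) (s : {w : List Bool // w.length + 3 = k} → Bool) : List Bool → Bool :=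
  fun w => if h : w.length + 3 = k then s ⟨w, h⟩ else false

lemma gate_val (k : ℕ) (s : {w : List Bool // w.length + 3 = k} → Bool)
    (w : {w : List Bool // w.length + 3 = k}) : gate k s w.val = s w := by
  unfold gate
  rw [dif_pos w.2]

lemma gate_inj (k : ℕ) : Function.Injective
    (fun s : {w : List Bool // w.length + 3 = k} → Bool => Fperm c (gate k s) k) := by
  intro s s' hss
  by_contra hne
  have hex : ∃ w, s w ≠ s' w := by
    by_contra h; push_neg at h; exact hne (funext h)
  obtain ⟨w, hw⟩ := hex
  have key : ∀ t t' : {w : List Bool // w.length + 3 = k} → Bool,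
      t w = true → t' w = false → Fperm c (gate k t) k ≠ Fperm c (gate k t') k := by
    intro t t' ht ht' heq
    obtain ⟨l, hl, hne', hfix⟩ := moved c (gate k t) k w.val w.2
      (by rw [gate_val]; exact ht)
    have h2 := congrArg (fun f : Equiv.Perm (TVert k) => (f ⟨l, hl⟩).val) heq
    change Fval c (gate k t) k l = Fval c (gate k t') k l at h2
    rw [hfix (gate k t') (by rw [gate_val]; exact ht')] at h2
    exact hne' h2
  cases hsw : s w <;> cases hs'w : s' w
  · rw [hsw, hs'w] at hw; exact hw rfl
  · exact key s' s hs'w hsw hss.symm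
  · exact key s s' hsw hs'w hss
  · rw [hsw, hs'w] at hw; exact hw rfl

instance finTVert (k : ℕ) : Finite (TVert k) := (List.finite_length_lt Bool k).to_subtype

instance finIdx (k : ℕ) : Finite {w : List Bool // w.length + 3 = k} :=
  Set.Finite.to_subtype <| (List.finite_length_le Bool k).subset fun l hl => by
    have h3 : l.length + 3 = k := hl
    show l.length ≤ k
    omega

end Aux

theorem stmt_15 (k : ℕ) (hk : 3 ≤ k) (c : List Bool → Bool) :
    2 ^ 2 ^ (k - 3) ≤ Nat.card (ColorAuts k c) := by
  classical
  set Φ : ({w : List Bool // w.length + 3 = k} → Bool) → ↥(ColorAuts k c) :=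
    fun s => ⟨Aux.Fperm c (Aux.gate k s) k, Aux.Fperm_mem c (Aux.gate k s) k hk⟩ with hΦ
  have hinj : Function.Injective Φ := fun s s' h =>
    Aux.gate_inj c k (Subtype.ext_iff.mp h)
  have hcard := Nat.card_le_card_of_injective Φ hinj
  have e : {w : List Bool // w.length + 3 = k} ≃ (Fin (k - 3) → Bool) :=
    (Equiv.subtypeEquivRight (fun l => by omega)).trans (Equiv.vectorEquivFin Bool (k - 3))
  have hidx : Nat.card {w : List Bool // w.length + 3 = k} = 2 ^ (k - 3) := by
    rw [Nat.card_congr e, Nat.card_fun]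
    simp
  rw [Nat.card_fun, hidx] at hcard
  simpa using hcard
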